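/- arXiv:2604.13735 — 3 statements merged into one kernel-verified Lean document; each statement's English description precedes it below -/
import Mathlib

section
/- Let H be a Hermitian 2^n × 2^n complex matrix whose smallest eigenvalue E_g has multiplicity one, let v be a unit eigenvector of H for E_g and ρ^g = v vᴴ, and let E_1 be the smallest eigenvalue of H restricted to the orthogonal complement of v (the second-smallest eigenvalue). Then for every density matrix ρ, Re Tr[ρ H] ≥ E_g · p + E_1 · (1 − p), where p = Re Tr[ρ ρ^g]. -/
open Matrix
open scoped ComplexOrder

theorem re_trace_ge_ground_overlap_bound (n : ℕ)
    (H : Matrix (Fin (2 ^ n)) (Fin (2 ^ n)) ℂ) (hH : H.IsHermitian)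
    (v : Fin (2 ^ n) → ℂ) (Eg E1 : ℝ)
    -- `v` is a unit eigenvector of `H` with eigenvalue `Eg`
    (hv : star v ⬝ᵥ v = 1)
    (hev : H *ᵥ v = (Eg : ℂ) • v)
    -- the eigenvalue `Eg` has multiplicity one, and `E1` is the second-smallest
    -- eigenvalue: it is the smallest eigenvalue of `H` restricted to the
    -- orthogonal complement of `v`
    (hgap : Eg < E1)
    (hE1_min : ∀ w : Fin (2 ^ n) → ℂ, star v ⬝ᵥ w = 0 →
      E1 * (star w ⬝ᵥ w).re ≤ (star w ⬝ᵥ (H *ᵥ w)).re)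
    (hE1_eig : ∃ w : Fin (2 ^ n) → ℂ, w ≠ 0 ∧ star v ⬝ᵥ w = 0 ∧ H *ᵥ w = (E1 : ℂ) • w)
    -- `ρ` is a density matrix
    (ρ : Matrix (Fin (2 ^ n)) (Fin (2 ^ n)) ℂ) (hρ : ρ.PosSemidef) (hρtr : ρ.trace = 1) :
    Eg * ((ρ * vecMulVec v (star v)).trace).re
      + E1 * (1 - ((ρ * vecMulVec v (star v)).trace).re) ≤ ((ρ * H).trace).re := by
  classical
  set P : Matrix (Fin (2 ^ n)) (Fin (2 ^ n)) ℂ := vecMulVec v (star v) with hPdef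
  have hPmulVec : ∀ x : Fin (2 ^ n) → ℂ, P *ᵥ x = (star v ⬝ᵥ x) • v := by
    intro x
    ext i
    simp [hPdef, mulVec, vecMulVec_apply, dotProduct, Finset.mul_sum, mul_comm, mul_assoc,
      mul_left_comm]
  have hPH : P.IsHermitian := by
    ext i j
    simp [hPdef, conjTranspose_apply, vecMulVec_apply, mul_comm]
  -- the shifted matrix
  set M : Matrix (Fin (2 ^ n)) (Fin (2 ^ n)) ℂ :=
    H - (Eg : ℂ) • P - (E1 : ℂ) • (1 - P) with hMdef
  have hMH : M.IsHermitian := by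
    have h1 : (1 : Matrix (Fin (2 ^ n)) (Fin (2 ^ n)) ℂ).IsHermitian := isHermitian_one
    simp only [hMdef, Matrix.IsHermitian, conjTranspose_sub, conjTranspose_smul, hH.eq,
      hPH.eq, h1.eq, Complex.star_def, Complex.conj_ofReal]
  have hvH : star v ᵥ* H = (Eg : ℂ) • star v := by
    have h := congrArg star hev
    rw [star_mulVec, hH.eq] at h
    simpa [star_smul, Complex.star_def, Complex.conj_ofReal] using h
  -- M is positive semidefinite
  have hMpsd : M.PosSemidef := by
    refine .of_dotProduct_mulVec_nonneg hMH fun x => ?_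
    set c : ℂ := star v ⬝ᵥ x with hc
    set w : Fin (2 ^ n) → ℂ := x - c • v with hwdef
    have hw : star v ⬝ᵥ w = 0 := by
      simp [hwdef, dotProduct_sub, hv, hc]
    have hwv : star w ⬝ᵥ v = 0 := by
      have h2 : star (star v ⬝ᵥ w) = 0 := by rw [hw]; simp
      rwa [← star_dotProduct_star, star_star] at h2
    have hvHw : star v ⬝ᵥ (H *ᵥ w) = 0 := by
      rw [dotProduct_mulVec, hvH, smul_dotProduct, hw, smul_zero]
    have hx : x = w + c • v := by simp [hwdef]
    have hq : star x ⬝ᵥ (M *ᵥ x) = star w ⬝ᵥ (H *ᵥ w) - (E1 : ℂ) * (star w ⬝ᵥ w) := by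
      have hPx : P *ᵥ x = c • v := by rw [hPmulVec, hc]
      simp only [hMdef, sub_mulVec, smul_mulVec, hPx, one_mulVec,
        dotProduct_sub, dotProduct_smul]
      rw [hx]
      simp only [star_add, star_smul, mulVec_add, mulVec_smul, hev,
        add_dotProduct, dotProduct_add, smul_dotProduct, dotProduct_smul,
        smul_eq_mul, hwv, hvHw, hw, hv, hwdef]
      push_cast
      ring_nf
      rw [← hwdef, hvHw, hw]
      ring
    rw [hq]
    -- the quadratic form on `w` is real and at least `E1 * ‖w‖²`
    have him : (star w ⬝ᵥ (H *ᵥ w)).im = 0 := by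
      have hself : star (star w ⬝ᵥ (H *ᵥ w)) = star w ⬝ᵥ (H *ᵥ w) := by
        rw [dotProduct_comm (star w), ← star_dotProduct_star, star_star, star_mulVec, hH.eq,
          dotProduct_comm w, ← dotProduct_mulVec, dotProduct_comm]
      exact Complex.conj_eq_iff_im.mp hself
    have him2 : (star w ⬝ᵥ w).im = 0 := by
      have hself : star (star w ⬝ᵥ w) = star w ⬝ᵥ w := by
        rw [dotProduct_comm (star w), ← star_dotProduct_star, star_star]
      exact Complex.conj_eq_iff_im.mp hself
    rw [Complex.le_def]
    constructor
    · simp only [Complex.sub_re, Complex.mul_re, Complex.ofReal_re, Complex.ofReal_im,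
        him2, Complex.zero_re, mul_zero, zero_mul, sub_zero]
      have := hE1_min w hw
      linarith
    · simp [Complex.sub_im, Complex.mul_im, him, him2]
  -- trace of ρ * M is nonnegative
  have htr : (0 : ℂ) ≤ (ρ * M).trace := by
    obtain ⟨B, hB⟩ : ∃ B : Matrix (Fin (2 ^ n)) (Fin (2 ^ n)) ℂ, ρ = Bᴴ * B := by
      open scoped MatrixOrder Matrix.Norms.L2Operator in
      obtain ⟨B, hB⟩ := CStarAlgebra.nonneg_iff_eq_star_mul_self.mp hρ.nonneg
      exact ⟨B, hB⟩
    have hcyc : (ρ * M).trace = (B * M * Bᴴ).trace := by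
      rw [hB, Matrix.trace_mul_cycle, Matrix.trace_mul_cycle]
    rw [hcyc]
    have hBMB : (B * M * Bᴴ).PosSemidef := hMpsd.mul_mul_conjTranspose_same B
    have : ∀ i, (0 : ℂ) ≤ (B * M * Bᴴ) i i := by
      intro i
      have := hBMB.dotProduct_mulVec_nonneg (Pi.single i 1)
      simpa [mulVec_single, dotProduct, Pi.single_apply, Finset.sum_ite_eq] using this
    rw [Matrix.trace]
    exact Finset.sum_nonneg fun i _ => this i
  -- expand the trace
  have hexpand : (ρ * M).trace
      = (ρ * H).trace - (Eg : ℂ) * (ρ * P).trace - (E1 : ℂ) * (1 - (ρ * P).trace) := by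
    simp only [hMdef, Matrix.mul_sub, Matrix.mul_smul, trace_sub, trace_smul,
      Matrix.mul_one, hρtr, smul_eq_mul]
  have h0 : (0 : ℝ) ≤ ((ρ * M).trace).re := by
    rw [Complex.le_def] at htr
    simpa using htr.1
  rw [hexpand] at h0
  simp only [Complex.sub_re, Complex.mul_re, Complex.ofReal_re, Complex.ofReal_im,
    zero_mul, sub_zero, Complex.one_re, Complex.one_im, Complex.sub_im, zero_sub,
    mul_neg, neg_neg] at h0
  linarith [h0]
end

section
/- Let U be a unitary 2^n × 2^n complex matrix and let the n-qubit operator space be an internal orthogonal direct sum of finitely many subspaces B_κ, each conjugation-invariant under U, with orthogonal projections P_κ. Let H be a Hermitian matrix whose smallest eigenvalue E_g has multiplicity one, with unit eigenvector v, ρ^g = v vᴴ, and second-smallest eigenvalue E_1. Then for every density matrix ρ^i, writing π_g = Σ_κ ‖P_κ(ρ^g)‖ · ‖P_κ(ρ^i)‖, one has Re Tr[(U ρ^i Uᴴ) H] ≥ E_g · π_g + E_1 · (1 − π_g). -/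
open Matrix

/-- The Hilbert–Schmidt (Frobenius) norm of a matrix, induced by the inner
product `⟨A, B⟩ = Tr(Aᴴ B)`. -/
noncomputable def hsNorm {N : ℕ} (A : Matrix (Fin N) (Fin N) ℂ) : ℝ :=
  Real.sqrt ((Aᴴ * A).trace.re)

/-- `P` is the orthogonal projection onto the subspace `B` of the operator space,
with respect to the Frobenius inner product `⟨A, C⟩ = Tr(Aᴴ C)`: every value of `P`
lies in `B`, and `A - P A` is orthogonal to `B`. -/
def IsHSOrthogonalProjection {N : ℕ} (B : Submodule ℂ (Matrix (Fin N) (Fin N) ℂ))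
    (P : Matrix (Fin N) (Fin N) ℂ →ₗ[ℂ] Matrix (Fin N) (Fin N) ℂ) : Prop :=
  (∀ A, P A ∈ B) ∧ ∀ A, ∀ C ∈ B, ((A - P A)ᴴ * C).trace = 0

/-- A subspace `B` of the operator space is conjugation-invariant under a
unitary `U` if `U A Uᴴ ∈ B` and `Uᴴ A U ∈ B` for every `A ∈ B`. -/
def ConjInvariant {N : ℕ} (U : Matrix (Fin N) (Fin N) ℂ)
    (B : Submodule ℂ (Matrix (Fin N) (Fin N) ℂ)) : Prop :=
  ∀ A ∈ B, U * A * Uᴴ ∈ B ∧ Uᴴ * A * U ∈ B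



open scoped ComplexOrder
namespace Reach

variable {N : ℕ}

lemma trace_ctm (A B : Matrix (Fin N) (Fin N) ℂ) :
    (Aᴴ * B).trace = ∑ p : Fin N × Fin N, (starRingEnd ℂ) (A p.1 p.2) * B p.1 p.2 := by
  rw [Fintype.sum_prod_type]
  simp only [Matrix.trace, Matrix.mul_apply, Matrix.diag, conjTranspose_apply]
  rw [Finset.sum_comm]
  simp [RCLike.star_def]

/-- the matrix as a Euclidean vector -/
def toE (A : Matrix (Fin N) (Fin N) ℂ) : EuclideanSpace ℂ (Fin N × Fin N) :=
  WithLp.toLp 2 (fun p : Fin N × Fin N => A p.1 p.2)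

lemma inner_toE (A B : Matrix (Fin N) (Fin N) ℂ) :
    (inner ℂ (toE A) (toE B) : ℂ) = (Aᴴ * B).trace := by
  rw [trace_ctm]
  simp [toE, PiLp.inner_apply, RCLike.inner_apply, mul_comm]

lemma norm_toE (A : Matrix (Fin N) (Fin N) ℂ) : ‖toE A‖ = hsNorm A := by
  rw [hsNorm, EuclideanSpace.norm_eq]
  congr 1
  rw [trace_ctm]
  rw [Complex.re_sum]
  refine Finset.sum_congr rfl fun p _ => ?_
  have : (starRingEnd ℂ) (A p.1 p.2) * A p.1 p.2 = (Complex.normSq (A p.1 p.2) : ℂ) := Complex.normSq_eq_conj_mul_self.symm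
  rw [this]
  rw [Complex.ofReal_re]
  show ‖A p.1 p.2‖ ^ 2 = _
  rw [Complex.sq_norm]

lemma hsNorm_nonneg (A : Matrix (Fin N) (Fin N) ℂ) : 0 ≤ hsNorm A :=
  Real.sqrt_nonneg _

lemma hs_cauchy (A B : Matrix (Fin N) (Fin N) ℂ) :
    ((Aᴴ * B).trace).re ≤ hsNorm A * hsNorm B := by
  rw [← inner_toE, ← norm_toE A, ← norm_toE B]
  exact re_inner_le_norm (𝕜 := ℂ) (toE A) (toE B)

lemma eq_zero_of_trace_self (A : Matrix (Fin N) (Fin N) ℂ)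
    (h : (Aᴴ * A).trace = 0) : A = 0 := by
  have h2 : (inner ℂ (toE A) (toE A) : ℂ) = 0 := by rw [inner_toE]; exact h
  have := inner_self_eq_zero (𝕜 := ℂ).mp h2
  ext i j
  have := congrArg (fun x : EuclideanSpace ℂ (Fin N × Fin N) => x (i, j)) this
  simpa [toE] using this


lemma conj_inner (U A B : Matrix (Fin N) (Fin N) ℂ) (hUU : Uᴴ * U = 1) :
    ((U * A * Uᴴ)ᴴ * (U * B * Uᴴ)).trace = (Aᴴ * B).trace := by
  have e : (U * A * Uᴴ)ᴴ * (U * B * Uᴴ) = U * (Aᴴ * B) * Uᴴ := by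
    simp only [conjTranspose_mul, conjTranspose_conjTranspose, Matrix.mul_assoc]
    rw [← Matrix.mul_assoc Uᴴ U, hUU, Matrix.one_mul]
  rw [e, Matrix.trace_mul_cycle, ← Matrix.mul_assoc, hUU, Matrix.one_mul]

lemma proj_unique {B : Submodule ℂ (Matrix (Fin N) (Fin N) ℂ)}
    {P : Matrix (Fin N) (Fin N) ℂ →ₗ[ℂ] Matrix (Fin N) (Fin N) ℂ}
    (hP : IsHSOrthogonalProjection B P) {A X : Matrix (Fin N) (Fin N) ℂ}
    (hX : X ∈ B) (ho : ∀ C ∈ B, ((A - X)ᴴ * C).trace = 0) : P A = X := by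
  have hD : P A - X ∈ B := Submodule.sub_mem B (hP.1 A) hX
  have key : ∀ C ∈ B, (((P A - X))ᴴ * C).trace = 0 := by
    intro C hC
    have e : P A - X = (A - X) - (A - P A) := by abel
    rw [e, conjTranspose_sub, Matrix.sub_mul, trace_sub, ho C hC, hP.2 A C hC, sub_zero]
  have := key _ hD
  have := eq_zero_of_trace_self _ this
  exact sub_eq_zero.mp this

lemma proj_conj {U : Matrix (Fin N) (Fin N) ℂ} (hUU : Uᴴ * U = 1) (hUU' : U * Uᴴ = 1)
    {B : Submodule ℂ (Matrix (Fin N) (Fin N) ℂ)}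
    {P : Matrix (Fin N) (Fin N) ℂ →ₗ[ℂ] Matrix (Fin N) (Fin N) ℂ}
    (hP : IsHSOrthogonalProjection B P) (hinv : ConjInvariant U B)
    (A : Matrix (Fin N) (Fin N) ℂ) :
    P (U * A * Uᴴ) = U * (P A) * Uᴴ := by
  refine proj_unique hP ((hinv _ (hP.1 A)).1) ?_
  intro C hC
  have e : U * A * Uᴴ - U * P A * Uᴴ = U * (A - P A) * Uᴴ := by
    simp only [Matrix.mul_sub, Matrix.sub_mul]
  rw [e]
  have e2 : ((U * (A - P A) * Uᴴ)ᴴ * C).trace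
      = ((A - P A)ᴴ * (Uᴴ * C * U)).trace := by
    simp only [conjTranspose_mul, conjTranspose_conjTranspose, Matrix.mul_assoc]
    rw [Matrix.trace_mul_comm]
    simp only [Matrix.mul_assoc]
  rw [e2]
  exact hP.2 _ _ ((hinv C hC).2)

lemma complete {ι : Type} [Fintype ι]
    (B : ι → Submodule ℂ (Matrix (Fin N) (Fin N) ℂ))
    (htop : (⨆ κ, B κ) = ⊤)
    (horth : ∀ κ κ', κ ≠ κ' → ∀ A ∈ B κ, ∀ C ∈ B κ', (Aᴴ * C).trace = 0)
    (P : ι → (Matrix (Fin N) (Fin N) ℂ →ₗ[ℂ] Matrix (Fin N) (Fin N) ℂ))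
    (hP : ∀ κ, IsHSOrthogonalProjection (B κ) (P κ))
    (A : Matrix (Fin N) (Fin N) ℂ) : ∑ κ, P κ A = A := by
  classical
  set D := A - ∑ κ, P κ A with hD
  set L : Matrix (Fin N) (Fin N) ℂ →ₗ[ℂ] ℂ :=
    (Matrix.traceLinearMap (Fin N) ℂ ℂ).comp (LinearMap.mulLeft ℂ Dᴴ) with hL
  have hLapp : ∀ C, L C = (Dᴴ * C).trace := fun C => rfl
  have hker : ∀ κ, B κ ≤ LinearMap.ker L := by
    intro κ C hC
    rw [LinearMap.mem_ker, hLapp]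
    have e : D = (A - P κ A) - ∑ κ' ∈ Finset.univ.erase κ, P κ' A := by
      rw [hD, ← Finset.add_sum_erase _ _ (Finset.mem_univ κ)]; abel
    rw [e, conjTranspose_sub, Matrix.sub_mul, trace_sub, (hP κ).2 A C hC,
      conjTranspose_sum, Finset.sum_mul, trace_sum, Finset.sum_eq_zero, sub_zero]
    intro κ' hκ'
    exact horth κ' κ (Finset.ne_of_mem_erase hκ') _ ((hP κ').1 A) C hC
  have : (⊤ : Submodule ℂ _) ≤ LinearMap.ker L := htop ▸ iSup_le hker
  have hDC : ∀ C : Matrix (Fin N) (Fin N) ℂ, (Dᴴ * C).trace = 0 := fun C =>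
    LinearMap.mem_ker.mp (this Submodule.mem_top)
  have := eq_zero_of_trace_self D (hDC D)
  rw [sub_eq_zero] at this
  exact this.symm

lemma parseval {ι : Type} [Fintype ι]
    (B : ι → Submodule ℂ (Matrix (Fin N) (Fin N) ℂ))
    (htop : (⨆ κ, B κ) = ⊤)
    (horth : ∀ κ κ', κ ≠ κ' → ∀ A ∈ B κ, ∀ C ∈ B κ', (Aᴴ * C).trace = 0)
    (P : ι → (Matrix (Fin N) (Fin N) ℂ →ₗ[ℂ] Matrix (Fin N) (Fin N) ℂ))
    (hP : ∀ κ, IsHSOrthogonalProjection (B κ) (P κ))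
    (A C : Matrix (Fin N) (Fin N) ℂ) :
    (Aᴴ * C).trace = ∑ κ, ((P κ A)ᴴ * (P κ C)).trace := by
  classical
  conv_lhs => rw [← complete B htop horth P hP A, ← complete B htop horth P hP C]
  rw [conjTranspose_sum, Finset.sum_mul, trace_sum]
  refine Finset.sum_congr rfl fun κ _ => ?_
  rw [Finset.mul_sum, trace_sum, Finset.sum_eq_single κ]
  · intro κ' _ hne
    exact horth κ κ' (Ne.symm hne) _ ((hP κ).1 A) _ ((hP κ').1 C)
  · intro h; exact absurd (Finset.mem_univ κ) h

lemma hsNorm_conj {U : Matrix (Fin N) (Fin N) ℂ} (hUU : Uᴴ * U = 1)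
    (A : Matrix (Fin N) (Fin N) ℂ) : hsNorm (U * A * Uᴴ) = hsNorm A := by
  unfold hsNorm
  rw [conj_inner U A A hUU]

lemma conj_quad {M : Matrix (Fin N) (Fin N) ℂ} (hM : M.IsHermitian) (x : Fin N → ℂ) :
    (starRingEnd ℂ) (star x ⬝ᵥ (M *ᵥ x)) = star x ⬝ᵥ (M *ᵥ x) := by
  simp only [dotProduct, mulVec, Pi.star_apply, map_sum, RCLike.star_def, Finset.mul_sum]
  rw [Finset.sum_comm]
  refine Finset.sum_congr rfl fun j _ => Finset.sum_congr rfl fun i _ => ?_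
  have h1 : (starRingEnd ℂ) (M i j) = M j i := by
    have := congrFun (congrFun hM j) i
    simpa [conjTranspose_apply, RCLike.star_def] using this
  rw [_root_.map_mul, _root_.map_mul, Complex.conj_conj, h1]; ring

lemma trace_re_nonneg_of_psd {A : Matrix (Fin N) (Fin N) ℂ} (hA : A.PosSemidef) :
    0 ≤ A.trace.re := by
  rw [Matrix.trace, Complex.re_sum]
  refine Finset.sum_nonneg fun i _ => ?_
  have := (posSemidef_iff_dotProduct_mulVec.mp hA).2 (Pi.single i 1)
  have e : star (Pi.single i 1) ⬝ᵥ (A *ᵥ Pi.single i 1) = A i i := by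
    simp [Matrix.mulVec_single, dotProduct, Pi.star_apply, Pi.single_apply, apply_ite (starRingEnd ℂ), ite_mul]
  rw [e] at this
  exact (Complex.le_def.mp this).1

lemma trace_mul_psd_nonneg {A B : Matrix (Fin N) (Fin N) ℂ}
    (hA : A.PosSemidef) (hB : B.PosSemidef) : 0 ≤ ((A * B).trace).re := by
  classical
  obtain ⟨S, hS⟩ : ∃ S : Matrix (Fin N) (Fin N) ℂ, A = star S * S := by
    open scoped MatrixOrder in
    obtain ⟨S, hSa, -, hS⟩ :=
      sub_zero A ▸ CFC.exists_sqrt_of_isSelfAdjoint_of_quasispectrumRestricts hA.isHermitian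
        (QuasispectrumRestricts.nnreal_of_nonneg hA.nonneg)
    exact ⟨S, by rw [hSa.star_eq]; simpa using hS.symm⟩
  rw [hS, Matrix.star_eq_conjTranspose, Matrix.mul_assoc, Matrix.trace_mul_comm, Matrix.mul_assoc]
  have := (Complex.le_def.mp (hB.mul_mul_conjTranspose_same S).trace_nonneg).1
  simpa [Matrix.mul_assoc] using this


lemma star_dot_comm (a b : Fin N → ℂ) :
    star a ⬝ᵥ b = (starRingEnd ℂ) (star b ⬝ᵥ a) := by
  simp only [dotProduct, Pi.star_apply, map_sum, _root_.map_mul, RCLike.star_def,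
    Complex.conj_conj]
  exact Finset.sum_congr rfl fun i _ => mul_comm _ _

lemma vmv_mulVec (v : Fin N → ℂ) (x : Fin N → ℂ) :
    vecMulVec v (star v) *ᵥ x = (star v ⬝ᵥ x) • v := by
  funext i
  simp [mulVec, vecMulVec_apply, dotProduct, Finset.mul_sum, mul_comm, mul_left_comm]

lemma vmv_herm (v : Fin N → ℂ) : (vecMulVec v (star v)).IsHermitian := by
  ext i j
  simp [conjTranspose_apply, vecMulVec_apply, mul_comm]

lemma M_psd (H : Matrix (Fin N) (Fin N) ℂ) (hH : H.IsHermitian)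
    (v : Fin N → ℂ) (Eg E1 : ℝ)
    (hv : star v ⬝ᵥ v = 1)
    (hev : H *ᵥ v = (Eg : ℂ) • v)
    (hE1_min : ∀ w : Fin N → ℂ, star v ⬝ᵥ w = 0 →
      E1 * (star w ⬝ᵥ w).re ≤ (star w ⬝ᵥ (H *ᵥ w)).re) :
    (H - (Eg : ℂ) • vecMulVec v (star v)
      - (E1 : ℂ) • (1 - vecMulVec v (star v))).PosSemidef := by
  rw [posSemidef_iff_dotProduct_mulVec]
  constructor
  · have h1 : (vecMulVec v (star v))ᴴ = vecMulVec v (star v) := vmv_herm v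
    simp only [Matrix.IsHermitian, conjTranspose_sub, conjTranspose_smul, conjTranspose_one,
      RCLike.star_def, Complex.conj_ofReal, hH.eq, h1]
  · intro x
    obtain ⟨c, hc⟩ : ∃ c, c = star v ⬝ᵥ x := ⟨_, rfl⟩
    obtain ⟨w, hw⟩ : ∃ w, w = x - c • v := ⟨_, rfl⟩
    have hx : x = w + c • v := by rw [hw]; abel
    have hvw : star v ⬝ᵥ w = 0 := by
      rw [hw, dotProduct_sub, dotProduct_smul, hv, ← hc]
      simp
    have hwv : star w ⬝ᵥ v = 0 := by
      rw [star_dot_comm, hvw, map_zero]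
    have hvHw : star v ⬝ᵥ (H *ᵥ w) = 0 := by
      rw [star_dot_comm]
      have e1 : star (H *ᵥ w) = star w ᵥ* H := by rw [star_mulVec, hH.eq]
      rw [e1, ← dotProduct_mulVec, hev, dotProduct_smul, hwv, smul_eq_mul, mul_zero, map_zero]
    have key : star x ⬝ᵥ ((H - (Eg : ℂ) • vecMulVec v (star v)
          - (E1 : ℂ) • (1 - vecMulVec v (star v))) *ᵥ x)
        = star w ⬝ᵥ (H *ᵥ w) - (E1 : ℂ) * (star w ⬝ᵥ w) := by
      rw [hx]
      simp only [sub_mulVec, smul_mulVec, mulVec_add, mulVec_smul, one_mulVec,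
        vmv_mulVec, dotProduct_add, add_dotProduct, dotProduct_smul, smul_dotProduct,
        dotProduct_sub, sub_dotProduct, star_add, star_smul, hev, hv, hvw, hwv, hvHw,
        smul_eq_mul, RCLike.star_def]
      ring
    rw [key]
    have h1 : (starRingEnd ℂ) (star w ⬝ᵥ (H *ᵥ w)) = star w ⬝ᵥ (H *ᵥ w) := by
      rw [← star_dot_comm (H *ᵥ w) w]
      have e1 : star (H *ᵥ w) = star w ᵥ* H := by rw [star_mulVec, hH.eq]
      rw [e1, ← dotProduct_mulVec]
    have h2 : (starRingEnd ℂ) (star w ⬝ᵥ w) = star w ⬝ᵥ w := (star_dot_comm w w).symm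
    have him1 : (star w ⬝ᵥ (H *ᵥ w)).im = 0 := by
      have := Complex.conj_eq_iff_im.mp h1; exact this
    have him2 : (star w ⬝ᵥ w).im = 0 := Complex.conj_eq_iff_im.mp h2
    rw [Complex.le_def]
    constructor
    · simp only [Complex.zero_re, Complex.sub_re, Complex.mul_re, Complex.ofReal_re,
        Complex.ofReal_im, him2, mul_zero, zero_mul, sub_zero]
      linarith [hE1_min w hvw]
    · simp [Complex.sub_im, Complex.mul_im, him1, him2]

end Reach

open scoped ComplexOrder


theorem reachability_lower_bound (n : ℕ) {ι : Type} [Fintype ι]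
    (U : Matrix (Fin (2 ^ n)) (Fin (2 ^ n)) ℂ)
    (hU : U ∈ Matrix.unitaryGroup (Fin (2 ^ n)) ℂ)
    (B : ι → Submodule ℂ (Matrix (Fin (2 ^ n)) (Fin (2 ^ n)) ℂ))
    -- the `B κ` fill up the whole operator space …
    (htop : (⨆ κ, B κ) = ⊤)
    -- … and are mutually orthogonal w.r.t. the Frobenius inner product,
    -- so that the operator space is their internal orthogonal direct sum
    (horth : ∀ κ κ', κ ≠ κ' → ∀ A ∈ B κ, ∀ C ∈ B κ', (Aᴴ * C).trace = 0)
    -- each `B κ` is conjugation-invariant under `U`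
    (hinv : ∀ κ, ConjInvariant U (B κ))
    (P : ι → (Matrix (Fin (2 ^ n)) (Fin (2 ^ n)) ℂ →ₗ[ℂ] Matrix (Fin (2 ^ n)) (Fin (2 ^ n)) ℂ))
    (hP : ∀ κ, IsHSOrthogonalProjection (B κ) (P κ))
    -- `H` is Hermitian with smallest eigenvalue `Eg` of multiplicity one,
    -- unit eigenvector `v`, and second-smallest eigenvalue `E1`
    (H : Matrix (Fin (2 ^ n)) (Fin (2 ^ n)) ℂ) (hH : H.IsHermitian)
    (v : Fin (2 ^ n) → ℂ) (Eg E1 : ℝ)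
    (hv : star v ⬝ᵥ v = 1)
    (hev : H *ᵥ v = (Eg : ℂ) • v)
    (hgap : Eg < E1)
    (hE1_min : ∀ w : Fin (2 ^ n) → ℂ, star v ⬝ᵥ w = 0 →
      E1 * (star w ⬝ᵥ w).re ≤ (star w ⬝ᵥ (H *ᵥ w)).re)
    (hE1_eig : ∃ w : Fin (2 ^ n) → ℂ, w ≠ 0 ∧ star v ⬝ᵥ w = 0 ∧ H *ᵥ w = (E1 : ℂ) • w)
    -- `ρi` is a density matrix
    (ρi : Matrix (Fin (2 ^ n)) (Fin (2 ^ n)) ℂ) (hρi : ρi.PosSemidef) (hρitr : ρi.trace = 1) :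
    Eg * (∑ κ, hsNorm (P κ (vecMulVec v (star v))) * hsNorm (P κ ρi))
      + E1 * (1 - ∑ κ, hsNorm (P κ (vecMulVec v (star v))) * hsNorm (P κ ρi))
      ≤ ((U * ρi * Uᴴ * H).trace).re := by
  classical
  have hUU : Uᴴ * U = 1 := by
    simpa [Matrix.star_eq_conjTranspose] using (Unitary.mem_iff.mp hU).1
  have hUU' : U * Uᴴ = 1 := by
    simpa [Matrix.star_eq_conjTranspose] using (Unitary.mem_iff.mp hU).2
  set ρg := vecMulVec v (star v) with hρg
  set ρ' := U * ρi * Uᴴ with hρ'd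
  have hρ'psd : ρ'.PosSemidef := hρi.mul_mul_conjTranspose_same U
  have hρ'tr : ρ'.trace = 1 := by
    rw [hρ'd, Matrix.trace_mul_cycle, hUU, Matrix.one_mul, hρitr]
  have hMpsd := Reach.M_psd H hH v Eg E1 hv hev hE1_min
  have h0 := Reach.trace_mul_psd_nonneg hρ'psd hMpsd
  have hexp : (ρ' * (H - (Eg:ℂ) • ρg - (E1:ℂ) • (1 - ρg))).trace
      = (ρ' * H).trace - (Eg:ℂ) * (ρ' * ρg).trace - (E1:ℂ) * (1 - (ρ' * ρg).trace) := by
    rw [Matrix.mul_sub, Matrix.mul_sub, Matrix.mul_smul, Matrix.mul_smul, Matrix.mul_sub,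
      Matrix.mul_one, trace_sub, trace_sub, trace_smul, trace_smul, trace_sub, hρ'tr]
    simp [smul_eq_mul]
  set f : ℝ := ((ρ' * ρg).trace).re with hf
  have h1 : Eg * f + E1 * (1 - f) ≤ ((ρ' * H).trace).re := by
    rw [hexp] at h0
    simp only [Complex.sub_re, Complex.mul_re, Complex.ofReal_re, Complex.ofReal_im,
      Complex.one_re, Complex.one_im, zero_mul, sub_zero] at h0
    linarith
  have hsum : f ≤ ∑ κ, hsNorm (P κ ρg) * hsNorm (P κ ρi) := by
    have e1 : (ρ' * ρg).trace = (ρgᴴ * ρ').trace := by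
      rw [Matrix.trace_mul_comm, (Reach.vmv_herm v).eq]
    have e2 := Reach.parseval B htop horth P hP ρg ρ'
    calc f = ∑ κ, (((P κ ρg)ᴴ * (P κ ρ')).trace).re := by
          rw [hf, e1, e2, Complex.re_sum]
      _ ≤ ∑ κ, hsNorm (P κ ρg) * hsNorm (P κ ρ') :=
          Finset.sum_le_sum fun κ _ => Reach.hs_cauchy _ _
      _ = ∑ κ, hsNorm (P κ ρg) * hsNorm (P κ ρi) := by
          refine Finset.sum_congr rfl fun κ _ => ?_
          rw [hρ'd, Reach.proj_conj hUU hUU' (hP κ) (hinv κ) ρi, Reach.hsNorm_conj hUU]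
  have egoal : U * ρi * Uᴴ * H = ρ' * H := by rw [hρ'd]
  rw [egoal]
  nlinarith [h1, hsum, hgap]
end

section
/- Let x, y : Fin n → Bool have the same parity, i.e. Σ_i x_i ≡ Σ_i y_i (mod 2). Then there exist m : ℕ, matchgate generators γ_1, …, γ_m each taken from the set {I^{⊗(j−1)} ⊗ Z ⊗ I^{⊗(n−j)} : 1 ≤ j ≤ n} ∪ {I^{⊗(j−1)} ⊗ P ⊗ P' ⊗ I^{⊗(n−j−1)} : 1 ≤ j ≤ n−1, P, P' ∈ {X, Y}}, real angles θ_1, …, θ_m, and a complex number ω with |ω| = 1, such that exp(i θ_1 γ_1) * ⋯ * exp(i θ_m γ_m) applied to |x⟩ equals ω • |y⟩. -/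
open Matrix

noncomputable section

/-- The 2×2 Pauli matrix `X`. -/
def σX : Matrix (Fin 2) (Fin 2) ℂ := !![0, 1; 1, 0]

/-- The 2×2 Pauli matrix `Y`. -/
def σY : Matrix (Fin 2) (Fin 2) ℂ := !![0, -Complex.I; Complex.I, 0]

/-- The 2×2 Pauli matrix `Z`. -/
def σZ : Matrix (Fin 2) (Fin 2) ℂ := !![1, 0; 0, -1]

/-- The Kronecker product `P 0 ⊗ P 1 ⊗ ⋯ ⊗ P (n-1)` of `n` 2×2 complex matrices,
realized as a `2^n × 2^n` matrix; rows and columns are indexed by `Fin (2^n)`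
via the equivalence `finFunctionFinEquiv : (Fin n → Fin 2) ≃ Fin (2^n)`, and the
entries are the products of the entries of the factors. -/
def pauliString (n : ℕ) (P : Fin n → Matrix (Fin 2) (Fin 2) ℂ) :
    Matrix (Fin (2 ^ n)) (Fin (2 ^ n)) ℂ :=
  Matrix.of fun i j =>
    ∏ k : Fin n, P k ((finFunctionFinEquiv.symm i : Fin n → Fin 2) k)
      ((finFunctionFinEquiv.symm j : Fin n → Fin 2) k)

/-- The Jordan–Wigner Majorana operators on `n` qubits (with sites and Majorana
indices 0-indexed): for `a = 2μ` this is `Z^{⊗μ} ⊗ X ⊗ I^{⊗(n-μ-1)}` and for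
`a = 2μ+1` it is `Z^{⊗μ} ⊗ Y ⊗ I^{⊗(n-μ-1)}`. -/
def majorana (n : ℕ) (a : Fin (2 * n)) : Matrix (Fin (2 ^ n)) (Fin (2 ^ n)) ℂ :=
  pauliString n fun k =>
    if (k : ℕ) < (a : ℕ) / 2 then σZ
    else if (k : ℕ) = (a : ℕ) / 2 then (if (a : ℕ) % 2 = 0 then σX else σY)
    else 1

/-- `c_S`: the product of the Majorana operators `c_a` for `a ∈ S`, taken in
increasing order of the index `a`. -/
def majoranaProd (n : ℕ) (S : Finset (Fin (2 * n))) :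
    Matrix (Fin (2 ^ n)) (Fin (2 ^ n)) ℂ :=
  ((S.sort (· ≤ ·)).map (majorana n)).prod

/-- `B_κ`: the complex linear span of the products of `κ` distinct Jordan–Wigner
Majorana operators. -/
def BMod (n κ : ℕ) : Submodule ℂ (Matrix (Fin (2 ^ n)) (Fin (2 ^ n)) ℂ) :=
  Submodule.span ℂ (majoranaProd n '' {S : Finset (Fin (2 * n)) | S.card = κ})

/-- The computational basis state `|x⟩` of `n` qubits, as a standard basis
vector of `ℂ^{2^n}`. -/
def ket (n : ℕ) (x : Fin n → Bool) : Fin (2 ^ n) → ℂ :=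
  Pi.single (finFunctionFinEquiv fun i => if x i then 1 else 0) 1

/-- The matchgate generators on `n` qubits: the single-qubit operators
`Z_j = I^{⊗j} ⊗ Z ⊗ I^{⊗(n-j-1)}` and the two-qubit operators
`I^{⊗j} ⊗ P ⊗ P' ⊗ I^{⊗(n-j-2)}` with `P, P' ∈ {X, Y}` on adjacent qubits. -/
def matchgateGens (n : ℕ) : Set (Matrix (Fin (2 ^ n)) (Fin (2 ^ n)) ℂ) :=
  {G | (∃ j : Fin n, G = pauliString n fun k => if k = j then σZ else 1) ∨
    (∃ j : ℕ, j + 1 < n ∧ ∃ P P' : Matrix (Fin 2) (Fin 2) ℂ,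
      (P = σX ∨ P = σY) ∧ (P' = σX ∨ P' = σY) ∧
      G = pauliString n fun k =>
        if (k : ℕ) = j then P else if (k : ℕ) = j + 1 then P' else 1)}

namespace MatchgateAux

lemma sigmaX_mul_self : σX * σX = 1 := by
  ext i j
  fin_cases i <;> fin_cases j <;>
    simp [σX, Matrix.mul_apply, Fin.sum_univ_two, Matrix.one_apply]

/-- bit flip on `Fin 2` -/
def fflip : Fin 2 → Fin 2 := fun b => if b = 0 then 1 else 0

lemma fflip_zero : fflip 0 = 1 := rfl
lemma fflip_one : fflip 1 = 0 := rfl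

lemma sigmaX_apply (a b : Fin 2) : σX a b = if a = fflip b then 1 else 0 := by
  fin_cases a <;> fin_cases b <;> simp [σX, fflip]

variable {n : ℕ}

lemma pauliString_mul (P Q : Fin n → Matrix (Fin 2) (Fin 2) ℂ) :
    pauliString n P * pauliString n Q = pauliString n fun k => P k * Q k := by
  ext i j
  simp only [pauliString, Matrix.mul_apply, Matrix.of_apply]
  rw [← Equiv.sum_comp finFunctionFinEquiv
    (fun l => (∏ k, P k ((finFunctionFinEquiv.symm i : Fin n → Fin 2) k)
        ((finFunctionFinEquiv.symm l : Fin n → Fin 2) k)) *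
      ∏ k, Q k ((finFunctionFinEquiv.symm l : Fin n → Fin 2) k)
        ((finFunctionFinEquiv.symm j : Fin n → Fin 2) k))]
  rw [Fintype.prod_sum]
  refine Finset.sum_congr rfl fun m _ => ?_
  rw [Equiv.symm_apply_apply, ← Finset.prod_mul_distrib]

lemma pauliString_one : pauliString n (fun _ => 1) = 1 := by
  ext i j
  simp only [pauliString, Matrix.of_apply]
  by_cases h : i = j
  · subst h
    rw [Matrix.one_apply_eq]
    exact Finset.prod_eq_one fun k _ => Matrix.one_apply_eq _
  · rw [Matrix.one_apply_ne h]
    have hne : finFunctionFinEquiv.symm i ≠ finFunctionFinEquiv.symm j := by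
      intro hc
      exact h (finFunctionFinEquiv.symm.injective hc)
    obtain ⟨k, hk⟩ := Function.ne_iff.mp hne
    exact Finset.prod_eq_zero (Finset.mem_univ k) (Matrix.one_apply_ne hk)

lemma pauliString_mulVec (P : Fin n → Matrix (Fin 2) (Fin 2) ℂ)
    (f g : Fin n → Fin 2) (s : Fin n → ℂ)
    (h : ∀ k a, P k a (f k) = if a = g k then s k else 0) :
    pauliString n P *ᵥ Pi.single (finFunctionFinEquiv f) 1
      = (∏ k, s k) • (Pi.single (finFunctionFinEquiv g) 1 : Fin (2 ^ n) → ℂ) := by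
  funext i
  rw [Matrix.mulVec_single_one]
  simp only [Matrix.col_apply, pauliString, Matrix.of_apply, Equiv.symm_apply_apply, mul_one,
    Pi.smul_apply, Pi.single_apply, smul_eq_mul]
  by_cases hi : (finFunctionFinEquiv.symm i : Fin n → Fin 2) = g
  · have hi' : i = finFunctionFinEquiv g := by
      rw [← hi, Equiv.apply_symm_apply]
    rw [if_pos hi', mul_one]
    refine Finset.prod_congr rfl fun k _ => ?_
    rw [h k, if_pos (congrFun hi k)]
  · have hi' : i ≠ finFunctionFinEquiv g := by
      intro hc
      apply hi
      rw [hc, Equiv.symm_apply_apply]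
    rw [if_neg hi', mul_zero]
    obtain ⟨k, hk⟩ := Function.ne_iff.mp hi
    refine Finset.prod_eq_zero (Finset.mem_univ k) ?_
    rw [h k, if_neg hk]

lemma exp_smul_involution {N : ℕ} (G : Matrix (Fin N) (Fin N) ℂ) (hG : G * G = 1) (c : ℂ) :
    NormedSpace.exp (c • G) = Complex.cosh c • 1 + Complex.sinh c • G := by
  letI : SeminormedRing (Matrix (Fin N) (Fin N) ℂ) := Matrix.linftyOpSemiNormedRing
  letI : NormedRing (Matrix (Fin N) (Fin N) ℂ) := Matrix.linftyOpNormedRing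
  letI : NormedAlgebra ℂ (Matrix (Fin N) (Fin N) ℂ) := Matrix.linftyOpNormedAlgebra
  have hpow : ∀ m : ℕ, G ^ m = if Even m then 1 else G := by
    intro m
    induction m with
    | zero => simp
    | succ m ih =>
      rw [pow_succ, ih]
      by_cases hm : Even m
      · simp [hm, Nat.even_add_one]
      · simp [hm, Nat.even_add_one, hG]
  have key : ∀ m : ℕ, ((m.factorial : ℂ))⁻¹ • (c • G) ^ m
      = ((c ^ m / m.factorial + (-c) ^ m / m.factorial) / 2) • (1 : Matrix (Fin N) (Fin N) ℂ)
        + ((c ^ m / m.factorial - (-c) ^ m / m.factorial) / 2) • G := by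
    intro m
    rw [smul_pow, hpow, smul_smul]
    rcases Nat.even_or_odd m with hm | hm
    · rw [if_pos hm, hm.neg_pow]
      have h1 : (c ^ m / m.factorial + c ^ m / m.factorial) / 2
          = (m.factorial : ℂ)⁻¹ * c ^ m := by ring
      have h2 : (c ^ m / m.factorial - c ^ m / m.factorial) / 2 = 0 := by ring
      rw [h1, h2, zero_smul, add_zero]
    · rw [if_neg (Nat.not_even_iff_odd.mpr hm), hm.neg_pow]
      have h1 : (c ^ m / m.factorial + -c ^ m / m.factorial) / 2 = 0 := by ring
      have h2 : (c ^ m / m.factorial - -c ^ m / m.factorial) / 2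
          = (m.factorial : ℂ)⁻¹ * c ^ m := by ring
      rw [h1, h2, zero_smul, zero_add]
  have hs1 : Summable (fun m : ℕ =>
      (c ^ m / m.factorial + (-c) ^ m / m.factorial) / 2 : ℕ → ℂ) :=
    ((NormedSpace.expSeries_div_summable c).add (NormedSpace.expSeries_div_summable (-c))).div_const 2
  have hs2 : Summable (fun m : ℕ =>
      (c ^ m / m.factorial - (-c) ^ m / m.factorial) / 2 : ℕ → ℂ) :=
    ((NormedSpace.expSeries_div_summable c).sub (NormedSpace.expSeries_div_summable (-c))).div_const 2
  have he : ∀ z : ℂ, (∑' m : ℕ, z ^ m / m.factorial) = Complex.exp z := by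
    intro z
    rw [Complex.exp_eq_exp_ℂ, NormedSpace.exp_eq_tsum_div]
  simp only [NormedSpace.exp_eq_tsum ℂ]
  rw [tsum_congr key]
  rw [Summable.tsum_add (hs1.smul_const _) (hs2.smul_const _), Summable.tsum_smul_const hs1, Summable.tsum_smul_const hs2]
  rw [tsum_div_const, tsum_div_const, Summable.tsum_add (NormedSpace.expSeries_div_summable c)
    (NormedSpace.expSeries_div_summable (-c)), Summable.tsum_sub (NormedSpace.expSeries_div_summable c)
    (NormedSpace.expSeries_div_summable (-c)), he, he]
  rw [Complex.cosh, Complex.sinh]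

lemma exp_pihalf_involution {N : ℕ} (G : Matrix (Fin N) (Fin N) ℂ) (hG : G * G = 1) :
    NormedSpace.exp ((Complex.I * ((Real.pi / 2 : ℝ) : ℂ)) • G) = Complex.I • G := by
  rw [exp_smul_involution G hG, mul_comm Complex.I, Complex.cosh_mul_I, Complex.sinh_mul_I,
    ← Complex.ofReal_cos, ← Complex.ofReal_sin, Real.cos_pi_div_two, Real.sin_pi_div_two]
  simp

/-- The `X ⊗ X` generator at sites `j, j+1`. -/
def GXX (n j : ℕ) : Matrix (Fin (2 ^ n)) (Fin (2 ^ n)) ℂ :=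
  pauliString n fun k => if (k : ℕ) = j then σX else if (k : ℕ) = j + 1 then σX else 1

lemma GXX_mem (j : ℕ) (hj : j + 1 < n) : GXX n j ∈ matchgateGens n :=
  Or.inr ⟨j, hj, σX, σX, Or.inl rfl, Or.inl rfl, rfl⟩

lemma GXX_sq (j : ℕ) : GXX n j * GXX n j = 1 := by
  rw [GXX, pauliString_mul, ← pauliString_one (n := n)]
  have hfun : (fun k : Fin n =>
      (if (k : ℕ) = j then σX else if (k : ℕ) = j + 1 then σX else 1) *
        (if (k : ℕ) = j then σX else if (k : ℕ) = j + 1 then σX else 1))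
      = fun _ : Fin n => (1 : Matrix (Fin 2) (Fin 2) ℂ) := by
    funext k
    by_cases h1 : (k : ℕ) = j
    · rw [if_pos h1, sigmaX_mul_self]
    · by_cases h2 : (k : ℕ) = j + 1
      · rw [if_neg h1, if_pos h2, sigmaX_mul_self]
      · rw [if_neg h1, if_neg h2, one_mul]
  rw [hfun]

lemma GXX_mulVec (j : ℕ) (f : Fin n → Fin 2) :
    GXX n j *ᵥ Pi.single (finFunctionFinEquiv f) 1
      = Pi.single (finFunctionFinEquiv fun k =>
          if (k : ℕ) = j ∨ (k : ℕ) = j + 1 then fflip (f k) else f k) 1 := by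
  have h := pauliString_mulVec
    (fun k => if (k : ℕ) = j then σX else if (k : ℕ) = j + 1 then σX else 1) f
    (fun k => if (k : ℕ) = j ∨ (k : ℕ) = j + 1 then fflip (f k) else f k) (fun _ => 1) ?_
  · simpa [GXX] using h
  · intro k a
    by_cases h1 : (k : ℕ) = j
    · simp [h1, sigmaX_apply]
    · by_cases h2 : (k : ℕ) = j + 1
      · simp [h1, h2, sigmaX_apply]
      · simp [h1, h2, Matrix.one_apply]

/-- flip bits at (ℕ-)positions `p` and `q`. -/
def flip2 (n p q : ℕ) (x : Fin n → Bool) : Fin n → Bool :=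
  fun i => if (i : ℕ) = p ∨ (i : ℕ) = q then !(x i) else x i

def cexp (n : ℕ) (G : Matrix (Fin (2 ^ n)) (Fin (2 ^ n)) ℂ) :
    Matrix (Fin (2 ^ n)) (Fin (2 ^ n)) ℂ :=
  NormedSpace.exp ((Complex.I * ((Real.pi / 2 : ℝ) : ℂ)) • G)

def Reach (n : ℕ) (x y : Fin n → Bool) : Prop :=
  ∃ (L : List (Matrix (Fin (2 ^ n)) (Fin (2 ^ n)) ℂ)) (ω : ℂ),
    (∀ G ∈ L, G ∈ matchgateGens n) ∧ ‖ω‖ = 1 ∧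
    (L.map (cexp n)).prod *ᵥ ket n x = ω • ket n y

lemma reach_refl (x : Fin n → Bool) : Reach n x x :=
  ⟨[], 1, by simp, by simp, by simp⟩

lemma reach_trans {x y z : Fin n → Bool} (h1 : Reach n x y) (h2 : Reach n y z) :
    Reach n x z := by
  obtain ⟨L1, ω1, hm1, ha1, he1⟩ := h1
  obtain ⟨L2, ω2, hm2, ha2, he2⟩ := h2
  refine ⟨L2 ++ L1, ω1 * ω2, ?_, by simp [ha1, ha2], ?_⟩
  · intro G hG
    rcases List.mem_append.mp hG with h | h
    exacts [hm2 G h, hm1 G h]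
  · rw [List.map_append, List.prod_append, ← Matrix.mulVec_mulVec, he1,
      Matrix.mulVec_smul, he2, smul_smul]

lemma reach_step {j : ℕ} (hj : j + 1 < n) (x : Fin n → Bool) :
    Reach n x (flip2 n j (j + 1) x) := by
  refine ⟨[GXX n j], Complex.I, ?_, by simp, ?_⟩
  · intro G hG
    rw [List.mem_singleton.mp hG]
    exact GXX_mem j hj
  · simp only [List.map_cons, List.map_nil, List.prod_cons, List.prod_nil, mul_one]
    rw [cexp, exp_pihalf_involution _ (GXX_sq j), Matrix.smul_mulVec]
    show Complex.I • (GXX n j *ᵥ Pi.single (finFunctionFinEquiv fun i => if x i then 1 else 0) 1)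
      = _
    rw [GXX_mulVec j]
    have hfun : (fun k : Fin n => if (k : ℕ) = j ∨ (k : ℕ) = j + 1
          then fflip (if x k then 1 else 0) else if x k then (1 : Fin 2) else 0)
        = fun i : Fin n => if flip2 n j (j + 1) x i then (1 : Fin 2) else 0 := by
      funext i
      by_cases h : (i : ℕ) = j ∨ (i : ℕ) = j + 1 <;>
        cases hx : x i <;> simp [flip2, h, hx, fflip_zero, fflip_one]
    rw [hfun]
    rfl

lemma reach_flip2 : ∀ (d p : ℕ) (x : Fin n → Bool), p + d + 1 < n →
    Reach n x (flip2 n p (p + d + 1) x) := by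
  intro d
  induction d with
  | zero =>
    intro p x h
    simpa using reach_step (n := n) (j := p) (by omega) x
  | succ d ih =>
    intro p x h
    have h1 : Reach n x (flip2 n (p + d + 1) (p + d + 2) x) :=
      reach_step (by omega) x
    have h2 : Reach n (flip2 n (p + d + 1) (p + d + 2) x)
        (flip2 n p (p + d + 1) (flip2 n (p + d + 1) (p + d + 2) x)) :=
      ih p _ (by omega)
    have h3 : flip2 n p (p + d + 1) (flip2 n (p + d + 1) (p + d + 2) x)
        = flip2 n p (p + (d + 1) + 1) x := by
      funext i
      simp only [flip2]
      have hq : p + (d + 1) + 1 = p + d + 2 := by omega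
      rw [hq]
      by_cases e1 : (i : ℕ) = p
      · have n1 : ¬ p = p + d + 1 := by omega
        have n2 : ¬ p = p + d + 2 := by omega
        simp [e1, n1, n2]
      · by_cases e2 : (i : ℕ) = p + d + 1
        · have n1 : ¬ (p + d + 1) = p := by omega
          have n2 : ¬ (p + d + 1) = p + d + 2 := by omega
          simp [e2, n1, n2]
        · by_cases e3 : (i : ℕ) = p + d + 2
          · have n1 : ¬ (p + d + 2) = p := by omega
            have n2 : ¬ (p + d + 2) = p + d + 1 := by omega
            simp [e3, e1, e2, n1, n2]
          · simp [e1, e2, e3]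
    rw [h3] at h2
    exact reach_trans h1 h2

lemma reach_flip2' {p q : ℕ} (hpq : p < q) (hq : q < n) (x : Fin n → Bool) :
    Reach n x (flip2 n p q x) := by
  have hq' : q = p + (q - p - 1) + 1 := by omega
  rw [hq']
  exact reach_flip2 (q - p - 1) p x (by omega)

lemma reach_of_diff : ∀ (d : ℕ), Even d → ∀ x y : Fin n → Bool,
    (Finset.filter (fun i => x i ≠ y i) Finset.univ).card = d → Reach n x y := by
  intro d
  induction d using Nat.strong_induction_on with
  | _ d ih =>
    intro hd x y hcard
    rcases Nat.eq_zero_or_pos d with h0 | hpos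
    · subst h0
      rw [Finset.card_eq_zero] at hcard
      have hxy : x = y := by
        funext i
        by_contra hne
        have hi : i ∈ Finset.filter (fun i => x i ≠ y i) Finset.univ :=
          Finset.mem_filter.mpr ⟨Finset.mem_univ i, hne⟩
        rw [hcard] at hi
        exact absurd hi (Finset.notMem_empty i)
      rw [hxy]
      exact reach_refl y
    · have hd2 : 2 ≤ d := by
        rcases hd with ⟨k, hk⟩; omega
      set D := Finset.filter (fun i => x i ≠ y i) Finset.univ with hD
      have hne : D.Nonempty := by
        rw [← Finset.card_pos, hcard]; omega
      obtain ⟨p, hp⟩ := hne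
      have hne2 : (D.erase p).Nonempty := by
        rw [← Finset.card_pos, Finset.card_erase_of_mem hp, hcard]; omega
      obtain ⟨q, hq⟩ := hne2
      have hqD : q ∈ D := Finset.mem_of_mem_erase hq
      have hqp : q ≠ p := Finset.ne_of_mem_erase hq
      set a : Fin n := if (p : ℕ) < (q : ℕ) then p else q with ha
      set b : Fin n := if (p : ℕ) < (q : ℕ) then q else p with hb
      have haD : a ∈ D := by rw [ha]; split <;> assumption
      have hbD : b ∈ D := by rw [hb]; split <;> assumption
      have hvne : (p : ℕ) ≠ (q : ℕ) := fun hc => hqp (Fin.ext hc.symm)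
      have hab : (a : ℕ) < (b : ℕ) := by
        rw [ha, hb]
        rcases Nat.lt_or_ge (p : ℕ) (q : ℕ) with h | h
        · simp [h]
        · have : (q : ℕ) < (p : ℕ) := by omega
          simp [Nat.not_lt.mpr h, this]
      have haneb : a ≠ b := fun hc => absurd (congrArg Fin.val hc) (Nat.ne_of_lt hab)
      set x1 := flip2 n (a : ℕ) (b : ℕ) x with hx1
      have hr1 : Reach n x x1 := reach_flip2' hab b.isLt x
      have hcond : ∀ i : Fin n, ((i : ℕ) = (a : ℕ) ∨ (i : ℕ) = (b : ℕ)) ↔ (i = a ∨ i = b) := by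
        intro i
        constructor
        · rintro (h | h)
          exacts [Or.inl (Fin.ext h), Or.inr (Fin.ext h)]
        · rintro (h | h)
          exacts [Or.inl (congrArg Fin.val h), Or.inr (congrArg Fin.val h)]
      have hfilter : Finset.filter (fun i => x1 i ≠ y i) Finset.univ = (D.erase a).erase b := by
        ext i
        simp only [Finset.mem_filter, Finset.mem_univ, true_and, Finset.mem_erase]
        by_cases hi : i = a ∨ i = b
        · have hiD : i ∈ D := by rcases hi with h | h <;> rw [h] <;> assumption
          have hixy : x i ≠ y i := by
            rw [hD] at hiD
            exact (Finset.mem_filter.mp hiD).2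
          have : x1 i = y i := by
            rw [hx1]
            simp only [flip2, if_pos ((hcond i).mpr hi)]
            cases hxv : x i <;> cases hyv : y i <;> simp_all
          constructor
          · intro hcontra; exact absurd this hcontra
          · rintro ⟨hib, hia, _⟩
            rcases hi with h | h
            exacts [absurd h hia, absurd h hib]
        · push_neg at hi
          have hcond' : ¬ ((i : ℕ) = (a : ℕ) ∨ (i : ℕ) = (b : ℕ)) := by
            rw [hcond i]; push_neg; exact hi
          have hx1i : x1 i = x i := by rw [hx1]; simp only [flip2, if_neg hcond']
          rw [hx1i]
          constructor
          · intro hxy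
            refine ⟨hi.2, hi.1, ?_⟩
            rw [hD]
            exact Finset.mem_filter.mpr ⟨Finset.mem_univ i, hxy⟩
          · rintro ⟨-, -, hiD⟩
            rw [hD] at hiD
            exact (Finset.mem_filter.mp hiD).2
      have hcard1 : (Finset.filter (fun i => x1 i ≠ y i) Finset.univ).card = d - 2 := by
        rw [hfilter,
          Finset.card_erase_of_mem (Finset.mem_erase.mpr ⟨fun hc => haneb hc.symm, hbD⟩),
          Finset.card_erase_of_mem haD, hcard]
        omega
      have hr2 : Reach n x1 y := by
        refine ih (d - 2) (by omega) ?_ x1 y hcard1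
        rcases hd with ⟨k, hk⟩
        exact ⟨k - 1, by omega⟩
      exact reach_trans hr1 hr2

end MatchgateAux


theorem matchgate_connects_same_parity (n : ℕ) (x y : Fin n → Bool)
    (hparity : (∑ i, (x i).toNat) % 2 = (∑ i, (y i).toNat) % 2) :
    ∃ (m : ℕ) (γ : Fin m → Matrix (Fin (2 ^ n)) (Fin (2 ^ n)) ℂ) (θ : Fin m → ℝ) (ω : ℂ),
      (∀ i, γ i ∈ matchgateGens n) ∧ ‖ω‖ = 1 ∧
      (List.ofFn fun i => NormedSpace.exp ((Complex.I * (θ i : ℂ)) • γ i)).prod *ᵥ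
          ket n x = ω • ket n y := by
  classical
  have hzero : (((Finset.filter (fun i => x i ≠ y i) Finset.univ).card : ℕ) : ZMod 2) = 0 := by
    have h1 : ((∑ i, (x i).toNat : ℕ) : ZMod 2) = ((∑ i, (y i).toNat : ℕ) : ZMod 2) :=
      (ZMod.natCast_eq_natCast_iff' _ _ _).mpr hparity
    push_cast at h1
    have h2 : (((Finset.filter (fun i => x i ≠ y i) Finset.univ).card : ℕ) : ZMod 2)
        = ∑ i, (((x i).toNat : ZMod 2) - ((y i).toNat : ZMod 2)) := by
      rw [Finset.card_filter]
      push_cast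
      refine Finset.sum_congr rfl fun i _ => ?_
      cases hx : x i <;> cases hy : y i <;> simp [hx, hy] <;> decide
    rw [h2, Finset.sum_sub_distrib, h1, sub_self]
  have heven : Even (Finset.filter (fun i => x i ≠ y i) Finset.univ).card :=
    even_iff_two_dvd.mpr ((ZMod.natCast_eq_zero_iff _ 2).mp hzero)
  obtain ⟨L, ω, hmem, habs, heq⟩ :=
    MatchgateAux.reach_of_diff _ heven x y rfl
  refine ⟨L.length, fun i => L.get i, fun _ => Real.pi / 2, ω,
    fun i => hmem _ (L.get_mem i), habs, ?_⟩
  have h1 : (List.ofFn fun i => MatchgateAux.cexp n (L.get i)) = L.map (MatchgateAux.cexp n) :=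
    List.ofFn_getElem_eq_map L (MatchgateAux.cexp n)
  rw [show (List.ofFn fun i => NormedSpace.exp
        ((Complex.I * (((fun _ => Real.pi / 2) i : ℝ) : ℂ)) • L.get i))
      = List.ofFn fun i => MatchgateAux.cexp n (L.get i) from rfl, h1]
  exact heq
end
end
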